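/- Let K(t,u) = 1 + (1/2)·(4(t−1/2)(u−1/2))^{1/7} for t,u ∈ [0,1], and let f₂(t) = (1/2)(√(57/17) + √(33/119)·(2(t−1/2))^{1/7}). Then ∫₀¹ K(t,u)·f₂(u)³ du = f₂(t) for all t ∈ [0,1]. -/

import Mathlib

noncomputable def oddRoot (n : ℕ) (x : ℝ) : ℝ :=
  if 0 ≤ x then x ^ ((1 : ℝ) / n) else -((-x) ^ ((1 : ℝ) / n))

noncomputable def f₂ (t : ℝ) : ℝ :=
  (1/2) * (Real.sqrt (57/17) + Real.sqrt (33/119) * oddRoot 7 (2 * (t - 1/2)))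

lemma oddRoot7_nonneg {x : ℝ} (hx : 0 ≤ x) : oddRoot 7 x = x ^ ((1:ℝ)/7) := by
  unfold oddRoot; rw [if_pos hx]; norm_num

lemma oddRoot7_neg_of (x : ℝ) (hx : x < 0) : oddRoot 7 x = -((-x) ^ ((1:ℝ)/7)) := by
  unfold oddRoot; rw [if_neg (not_le.2 hx)]; norm_num

lemma oddRoot7_neg (x : ℝ) : oddRoot 7 (-x) = -oddRoot 7 x := by
  rcases lt_trichotomy x 0 with h | h | h
  · rw [oddRoot7_nonneg (by linarith), oddRoot7_neg_of x h, neg_neg]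
  · simp [h, oddRoot7_nonneg le_rfl, Real.zero_rpow (by norm_num : (1:ℝ)/7 ≠ 0)]
  · rw [oddRoot7_neg_of (-x) (by linarith), oddRoot7_nonneg h.le, neg_neg]

lemma oddRoot7_mul (x y : ℝ) : oddRoot 7 (x * y) = oddRoot 7 x * oddRoot 7 y := by
  rcases le_or_gt 0 x with hx | hx <;> rcases le_or_gt 0 y with hy | hy
  · rw [oddRoot7_nonneg hx, oddRoot7_nonneg hy, oddRoot7_nonneg (mul_nonneg hx hy),
      Real.mul_rpow hx hy]
  · rw [show x * y = -(x * (-y)) by ring, oddRoot7_neg, oddRoot7_nonneg (mul_nonneg hx (by linarith)),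
      Real.mul_rpow hx (by linarith : (0:ℝ) ≤ -y), oddRoot7_nonneg hx, oddRoot7_neg_of y hy]
    ring
  · rw [show x * y = -((-x) * y) by ring, oddRoot7_neg, oddRoot7_nonneg (mul_nonneg (by linarith) hy),
      Real.mul_rpow (by linarith : (0:ℝ) ≤ -x) hy, oddRoot7_nonneg hy, oddRoot7_neg_of x hx]
    ring
  · rw [show x * y = (-x) * (-y) by ring, oddRoot7_nonneg (mul_nonneg (by linarith) (by linarith)),
      Real.mul_rpow (by linarith : (0:ℝ) ≤ -x) (by linarith : (0:ℝ) ≤ -y),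
      oddRoot7_neg_of x hx, oddRoot7_neg_of y hy]
    ring

lemma continuous_oddRoot7 : Continuous (oddRoot 7) := by
  have h : Continuous fun x : ℝ => x ^ ((1:ℝ)/7) :=
    Real.continuous_rpow_const (by norm_num)
  have e : oddRoot 7 = fun x : ℝ =>
      if (fun _ : ℝ => (0:ℝ)) x ≤ id x then x ^ ((1:ℝ)/7) else -((-x) ^ ((1:ℝ)/7)) := by
    funext x; unfold oddRoot; norm_num
  rw [e]
  refine Continuous.if_le h ((h.comp continuous_neg).neg) continuous_const continuous_id ?_
  intro x hx
  simp only [id] at hx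
  simp [← hx, Real.zero_rpow (by norm_num : (1:ℝ)/7 ≠ 0)]

lemma integral_oddRoot7_pow_base (k : ℕ) (hk : k ≠ 0) :
    ∫ x in (0:ℝ)..1, (oddRoot 7 x) ^ k = 7 / ((k:ℝ) + 7) := by
  have h1 : ∫ x in (0:ℝ)..1, (oddRoot 7 x) ^ k = ∫ x in (0:ℝ)..1, x ^ ((k:ℝ)/7) := by
    apply intervalIntegral.integral_congr
    intro x hx
    simp only []
    rw [Set.uIcc_of_le (by norm_num : (0:ℝ) ≤ 1)] at hx
    rw [oddRoot7_nonneg hx.1, ← Real.rpow_natCast (x ^ ((1:ℝ)/7)) k, ← Real.rpow_mul hx.1]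
    ring_nf
  have hk7 : (0:ℝ) < (k:ℝ)/7 + 1 := by positivity
  rw [h1, integral_rpow (Or.inl (lt_of_lt_of_le (by norm_num) (by positivity : (0:ℝ) ≤ (k:ℝ)/7))), Real.one_rpow,
    Real.zero_rpow (ne_of_gt hk7)]
  have hk7' : ((k:ℝ) + 7) ≠ 0 := by positivity
  field_simp
  norm_num

lemma integral_oddRoot7_pow_odd (k : ℕ) (hk : Odd k) :
    ∫ x in (-1:ℝ)..1, (oddRoot 7 x) ^ k = 0 := by
  have h := intervalIntegral.integral_comp_neg (a := (-1:ℝ)) (b := 1)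
    (fun x => (oddRoot 7 x) ^ k)
  simp only [oddRoot7_neg, hk.neg_pow, neg_neg] at h
  rw [intervalIntegral.integral_neg] at h
  linarith

lemma integral_oddRoot7_pow_even (k : ℕ) (hk : Even k) :
    ∫ x in (-1:ℝ)..1, (oddRoot 7 x) ^ k = 2 * ∫ x in (0:ℝ)..1, (oddRoot 7 x) ^ k := by
  have hint : ∀ a b : ℝ, IntervalIntegrable (fun x => (oddRoot 7 x) ^ k) MeasureTheory.volume a b :=
    fun a b => (continuous_oddRoot7.pow k).intervalIntegrable a b
  have hsplit := intervalIntegral.integral_add_adjacent_intervals (hint (-1) 0) (hint 0 1)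
  have h := intervalIntegral.integral_comp_neg (a := (0:ℝ)) (b := 1)
    (fun x => (oddRoot 7 x) ^ k)
  simp only [oddRoot7_neg, hk.neg_pow, neg_zero] at h
  linarith

noncomputable def G (u : ℝ) : ℝ := oddRoot 7 (2 * (u - 1/2))

lemma continuous_G : Continuous G :=
  continuous_oddRoot7.comp (by continuity)

lemma moment (k : ℕ) :
    ∫ u in (0:ℝ)..1, (G u) ^ k = (1/2) * ∫ x in (-1:ℝ)..1, (oddRoot 7 x) ^ k := by
  have e : ∀ u : ℝ, G u ^ k = (fun x => (oddRoot 7 x) ^ k) (2 * u + (-1)) := by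
    intro u; simp only [G]; norm_num; ring_nf
  simp_rw [e]
  rw [intervalIntegral.integral_comp_mul_add (fun x => (oddRoot 7 x) ^ k)
    (two_ne_zero) (-1)]
  norm_num

lemma moment1 : ∫ u in (0:ℝ)..1, (G u) ^ 1 = 0 := by
  rw [moment, integral_oddRoot7_pow_odd 1 (by norm_num)]; ring
lemma moment2 : ∫ u in (0:ℝ)..1, (G u) ^ 2 = 7/9 := by
  rw [moment, integral_oddRoot7_pow_even 2 (by decide),
    integral_oddRoot7_pow_base 2 (by norm_num)]
  norm_num
lemma moment3 : ∫ u in (0:ℝ)..1, (G u) ^ 3 = 0 := by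
  rw [moment, integral_oddRoot7_pow_odd 3 ⟨1, by norm_num⟩]; ring
lemma moment4 : ∫ u in (0:ℝ)..1, (G u) ^ 4 = 7/11 := by
  rw [moment, integral_oddRoot7_pow_even 4 (by decide),
    integral_oddRoot7_pow_base 4 (by norm_num)]
  norm_num

lemma combo (c0 c1 c2 c3 c4 : ℝ) :
    ∫ u in (0:ℝ)..1,
        (c0 + c1 * (G u)^1 + c2 * (G u)^2 + c3 * (G u)^3 + c4 * (G u)^4)
      = c0 + c2 * (7/9) + c4 * (7/11) := by
  have hI : ∀ (c : ℝ) (k : ℕ),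
      IntervalIntegrable (fun u => c * (G u)^k) MeasureTheory.volume 0 1 :=
    fun c k => ((continuous_const.mul (continuous_G.pow k)).intervalIntegrable 0 1)
  rw [intervalIntegral.integral_add
      ((((intervalIntegrable_const).add (hI c1 1)).add (hI c2 2)).add (hI c3 3))
      (hI c4 4),
    intervalIntegral.integral_add (((intervalIntegrable_const).add (hI c1 1)).add (hI c2 2))
      (hI c3 3),
    intervalIntegral.integral_add ((intervalIntegrable_const).add (hI c1 1)) (hI c2 2),
    intervalIntegral.integral_add (intervalIntegrable_const) (hI c1 1),
    intervalIntegral.integral_const_mul, intervalIntegral.integral_const_mul,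
    intervalIntegral.integral_const_mul, intervalIntegral.integral_const_mul,
    moment1, moment2, moment3, moment4]
  simp

set_option linter.unusedVariables false in
theorem stmt6 (t : ℝ) (ht : t ∈ Set.Icc (0:ℝ) 1) :
    ∫ u in (0:ℝ)..1,
      (1 + (1/2) * oddRoot 7 (4 * (t - 1/2) * (u - 1/2))) * (f₂ u)^3 = f₂ t := by
  obtain ⟨A, hA⟩ : ∃ A, Real.sqrt (57/17) = A := ⟨_, rfl⟩
  obtain ⟨B, hB⟩ : ∃ B, Real.sqrt (33/119) = B := ⟨_, rfl⟩
  obtain ⟨s, hsdef⟩ : ∃ s, oddRoot 7 (2 * (t - 1/2)) = s := ⟨_, rfl⟩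
  have hA2 : A^2 = 57/17 := by rw [← hA]; exact Real.sq_sqrt (by norm_num)
  have hB2 : B^2 = 33/119 := by rw [← hB]; exact Real.sq_sqrt (by norm_num)
  have key : ∀ u : ℝ,
      (1 + (1/2) * oddRoot 7 (4 * (t - 1/2) * (u - 1/2))) * (f₂ u)^3
      = (A^3/8) + (3*A^2*B/8 + s*A^3/16) * (G u)^1
        + (3*A*B^2/8 + 3*s*A^2*B/16) * (G u)^2
        + (B^3/8 + 3*s*A*B^2/16) * (G u)^3 + (s*B^3/16) * (G u)^4 := by
    intro u
    have hk : oddRoot 7 (4 * (t - 1/2) * (u - 1/2)) = s * G u := by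
      rw [show 4 * (t - 1/2) * (u - 1/2) = (2*(t-1/2)) * (2*(u-1/2)) by ring,
        oddRoot7_mul, hsdef]; rfl
    rw [hk]
    simp only [f₂, G, hA, hB, hsdef]
    ring
  rw [intervalIntegral.integral_congr (fun u _ => key u), combo]
  simp only [f₂, hA, hB, hsdef]
  linear_combination (A/8 + 7*s*B/48) * hA2 + (7*A/24 + 7*s*B/176) * hB2
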